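/- Fix t ≥ 1 and let G be a finite simple graph that does not contain K_{t,t} as a subgraph. Then for every finite set S ⊆ V(G), the number of distinct neighborhood traces on S satisfies |{N_G(v) ∩ S : v ∈ V(G)}| ≤ (t−1)·C(|S|, t) + Σ_{i=0}^{t−1} C(|S|, i), where C(n,j) denotes the binomial coefficient. -/

import Mathlib

open Finset

/-- If a finite graph `G` does not contain `K_{t,t}` as a subgraph, then for every
finite set `S` of vertices, the number of distinct neighborhood traces on `S` is at
most `(t - 1) * C(|S|, t) + ∑_{i < t} C(|S|, i)`. -/

theorem stmt13 {V : Type*} [Fintype V] (t : ℕ) (ht : 1 ≤ t) (G : SimpleGraph V)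
    (hktt : ¬ ∃ S T : Finset V, Disjoint S T ∧ S.card = t ∧ T.card = t ∧
      ∀ s ∈ S, ∀ u ∈ T, G.Adj s u)
    (S : Finset V) :
    (Set.range fun v : V => G.neighborSet v ∩ (S : Set V)).ncard ≤
      (t - 1) * Nat.choose S.card t + ∑ i ∈ Finset.range t, Nat.choose S.card i := by
  classical
  set f : V → Finset V := fun v => S.filter (fun s => G.Adj v s) with hf
  have hcoe : ∀ v, G.neighborSet v ∩ (S : Set V) = ↑(f v) := by
    intro v; ext x; simp [hf, SimpleGraph.mem_neighborSet, and_comm]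
  set F : Finset (Finset V) := Finset.image f Finset.univ with hF
  have hrange : (Set.range fun v : V => G.neighborSet v ∩ (S : Set V)) =
      ((↑) : Finset V → Set V) '' ↑F := by
    ext A
    constructor
    · rintro ⟨v, rfl⟩
      exact ⟨f v, by simp [hF], (hcoe v).symm⟩
    · rintro ⟨B, hB, rfl⟩
      simp only [hF, coe_image, coe_univ, Set.image_univ, Set.mem_range] at hB
      obtain ⟨v, rfl⟩ := hB
      exact ⟨v, hcoe v⟩
  rw [hrange, Set.ncard_image_of_injective _ (fun a b h => Finset.coe_injective h),
    Set.ncard_coe_finset]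
  have hFsub : ∀ A ∈ F, A ⊆ S := by
    intro A hA
    simp only [hF, mem_image, mem_univ, true_and] at hA
    obtain ⟨v, rfl⟩ := hA
    exact filter_subset _ _
  -- split into big and small traces
  have hsplit : F.card = (F.filter (fun A => t ≤ A.card)).card +
      (F.filter (fun A => ¬ t ≤ A.card)).card :=
    (Finset.card_filter_add_card_filter_not _).symm
  rw [hsplit]
  gcongr
  · -- big traces
    set F₁ := F.filter (fun A => t ≤ A.card) with hF₁
    set g : Finset V → Finset V := fun A =>
      if h : t ≤ A.card then (Finset.exists_subset_card_eq h).choose else ∅ with hg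
    have hg1 : ∀ A ∈ F₁, g A ⊆ A ∧ (g A).card = t := by
      intro A hA
      have h : t ≤ A.card := (mem_filter.1 hA).2
      have := (Finset.exists_subset_card_eq h).choose_spec
      simpa [hg, h] using this
    have key : F₁.card ≤ (t - 1) * (F₁.image g).card := by
      apply Finset.card_le_mul_card_image
      intro T hT
      -- T has card t and fiber consists of traces containing T
      obtain ⟨A₀, hA₀, rfl⟩ := mem_image.1 hT
      set T := g A₀
      set W : Finset V := Finset.univ.filter (fun v => ∀ x ∈ T, G.Adj v x) with hW
      have hfib : F₁.filter (fun A => g A = T) ⊆ W.image f := by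
        intro A hA
        obtain ⟨hA1, hA2⟩ := mem_filter.1 hA
        have hAF : A ∈ F := (mem_filter.1 hA1).1
        simp only [hF, mem_image, mem_univ, true_and] at hAF
        obtain ⟨v, rfl⟩ := hAF
        have hTA : T ⊆ f v := hA2 ▸ (hg1 _ hA1).1
        refine mem_image.2 ⟨v, ?_, rfl⟩
        simp only [hW, mem_filter, mem_univ, true_and]
        intro x hx
        exact (mem_filter.1 (hTA hx)).2
      have hWcard : W.card ≤ t - 1 := by
        by_contra h
        push_neg at h
        have h' : t ≤ W.card := by omega
        obtain ⟨W', hW'sub, hW'card⟩ := Finset.exists_subset_card_eq h'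
        apply hktt
        refine ⟨W', T, ?_, hW'card, (hg1 _ hA₀).2, ?_⟩
        · rw [Finset.disjoint_left]
          intro v hv hvT
          have hvW : v ∈ W := hW'sub hv
          have := (mem_filter.1 hvW).2 v hvT
          exact G.irrefl this
        · intro s hs u hu
          have hsW : s ∈ W := hW'sub hs
          exact (mem_filter.1 hsW).2 u hu
      calc (F₁.filter (fun A => g A = T)).card ≤ (W.image f).card :=
            Finset.card_le_card hfib
        _ ≤ W.card := Finset.card_image_le
        _ ≤ t - 1 := hWcard
    refine key.trans ?_
    apply Nat.mul_le_mul_left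
    have himg : F₁.image g ⊆ S.powersetCard t := by
      intro T hT
      obtain ⟨A, hA, rfl⟩ := mem_image.1 hT
      exact Finset.mem_powersetCard.2 ⟨(hg1 _ hA).1.trans (hFsub _ (mem_filter.1 hA).1),
        (hg1 _ hA).2⟩
    calc (F₁.image g).card ≤ (S.powersetCard t).card := Finset.card_le_card himg
      _ = Nat.choose S.card t := Finset.card_powersetCard _ _
  · -- small traces
    have hsub : F.filter (fun A => ¬ t ≤ A.card) ⊆
        (Finset.range t).biUnion (fun i => S.powersetCard i) := by
      intro A hA
      obtain ⟨hA1, hA2⟩ := mem_filter.1 hA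
      refine Finset.mem_biUnion.2 ⟨A.card, Finset.mem_range.2 (by omega), ?_⟩
      exact Finset.mem_powersetCard.2 ⟨hFsub _ hA1, rfl⟩
    refine (Finset.card_le_card hsub).trans ?_
    rw [Finset.card_biUnion]
    · apply Finset.sum_le_sum
      intro i _
      rw [Finset.card_powersetCard]
    · intro i _ j _ hij
      rw [Function.onFun, Finset.disjoint_left]
      intro A hAi hAj
      exact hij ((Finset.mem_powersetCard.1 hAi).2.symm.trans (Finset.mem_powersetCard.1 hAj).2)
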